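/- Let X be a coalgebra over a field k with comultiplication Δ and counit ε, and let α : X ⊗ X → X and β : X ⊗ X^cop → X be linear maps, writing x^y := α(x ⊗ y) and x·y := β(x ⊗ y). Suppose (x·y_(1))^(y_(2)) = x^(y_(1))·y_(2) = ε(y)x for all x,y ∈ X. Then α is a coalgebra morphism if and only if β is a coalgebra morphism. -/

import Mathlib

open TensorProduct

noncomputable section
open Coalgebra

variable (k : Type) [Field k] (X : Type) [AddCommGroup X] [Module k X] [Coalgebra k X]

/-- x ⊗ y ↦ ε(y) x -/
def cE : X ⊗[k] X →ₗ[k] X :=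
  (TensorProduct.rid k X).toLinearMap ∘ₗ LinearMap.lTensor X (Coalgebra.counit (R := k))

/-- x ⊗ y ↦ ε(x) y -/
def cE' : X ⊗[k] X →ₗ[k] X :=
  (TensorProduct.lid k X).toLinearMap ∘ₗ LinearMap.rTensor X (Coalgebra.counit (R := k))

/-- first Sweedler component of a morphism `X⊗X → X⊗X` -/
def comp1 (s : X ⊗[k] X →ₗ[k] X ⊗[k] X) : X ⊗[k] X →ₗ[k] X := cE k X ∘ₗ s

/-- second Sweedler component of a morphism `X⊗X → X⊗X` -/
def comp2 (s : X ⊗[k] X →ₗ[k] X ⊗[k] X) : X ⊗[k] X →ₗ[k] X := cE' k X ∘ₗ s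

/-- `Gmap f (x ⊗ y) = f (x ⊗ y₍₁₎) ⊗ y₍₂₎` -/
def Gmap (f : X ⊗[k] X →ₗ[k] X) : X ⊗[k] X →ₗ[k] X ⊗[k] X :=
  TensorProduct.map f LinearMap.id ∘ₗ (TensorProduct.assoc k X X X).symm.toLinearMap ∘ₗ
    LinearMap.lTensor X (Coalgebra.comul (R := k))

/-- comultiplication of `X^cop` -/
def comulCop : X →ₗ[k] X ⊗[k] X :=
  (TensorProduct.comm k X X).toLinearMap ∘ₗ Coalgebra.comul (R := k)

/-- `GmapCop f (x ⊗ y) = f (x ⊗ y₍₂₎) ⊗ y₍₁₎` -/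
def GmapCop (f : X ⊗[k] X →ₗ[k] X) : X ⊗[k] X →ₗ[k] X ⊗[k] X :=
  TensorProduct.map f LinearMap.id ∘ₗ (TensorProduct.assoc k X X X).symm.toLinearMap ∘ₗ
    LinearMap.lTensor X (comulCop k X)

/-- comultiplication of `X ⊗ X` -/
def comulT : X ⊗[k] X →ₗ[k] (X ⊗[k] X) ⊗[k] (X ⊗[k] X) :=
  (TensorProduct.tensorTensorTensorComm k X X X X).toLinearMap ∘ₗ
    TensorProduct.map (Coalgebra.comul (R := k)) (Coalgebra.comul (R := k))

/-- comultiplication of `X ⊗ X^cop` -/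
def comulTCop : X ⊗[k] X →ₗ[k] (X ⊗[k] X) ⊗[k] (X ⊗[k] X) :=
  (TensorProduct.tensorTensorTensorComm k X X X X).toLinearMap ∘ₗ
    TensorProduct.map (Coalgebra.comul (R := k)) (comulCop k X)

/-- comultiplication of `X^cop ⊗ X^cop` -/
def comulTcc : X ⊗[k] X →ₗ[k] (X ⊗[k] X) ⊗[k] (X ⊗[k] X) :=
  (TensorProduct.tensorTensorTensorComm k X X X X).toLinearMap ∘ₗ
    TensorProduct.map (comulCop k X) (comulCop k X)

/-- counit of `X ⊗ X` -/
def counitT : X ⊗[k] X →ₗ[k] k :=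
  (TensorProduct.lid k k).toLinearMap ∘ₗ
    TensorProduct.map (Coalgebra.counit (R := k)) (Coalgebra.counit (R := k))

/-- `s : X⊗X → X⊗X` is a coalgebra morphism -/
def IsCoalgEndo (s : X ⊗[k] X →ₗ[k] X ⊗[k] X) : Prop :=
  comulT k X ∘ₗ s = TensorProduct.map s s ∘ₗ comulT k X ∧ counitT k X ∘ₗ s = counitT k X

/-- `f : X⊗X → X` is a coalgebra morphism -/
def IsCoalgMor (f : X ⊗[k] X →ₗ[k] X) : Prop :=
  Coalgebra.comul (R := k) ∘ₗ f = TensorProduct.map f f ∘ₗ comulT k X ∧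
  Coalgebra.counit (R := k) ∘ₗ f = counitT k X

/-- `f : X ⊗ X^cop → X` is a coalgebra morphism -/
def IsCoalgMorCop (f : X ⊗[k] X →ₗ[k] X) : Prop :=
  Coalgebra.comul (R := k) ∘ₗ f = TensorProduct.map f f ∘ₗ comulTCop k X ∧
  Coalgebra.counit (R := k) ∘ₗ f = counitT k X

/-- the operation `x ⊥ y := s₁ ((y·x₍₁₎) ⊗ x₍₂₎)` -/
def dOf (s : X ⊗[k] X →ₗ[k] X ⊗[k] X) (p : X ⊗[k] X →ₗ[k] X) : X ⊗[k] X →ₗ[k] X :=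
  comp1 k X s ∘ₗ Gmap k X p ∘ₗ (TensorProduct.comm k X X).toLinearMap

/-- the operation `⊥` of the endomorphism `s` viewed on `X^cop ⊗ X^cop` -/
def dOfCop (s : X ⊗[k] X →ₗ[k] X ⊗[k] X) (p : X ⊗[k] X →ₗ[k] X) : X ⊗[k] X →ₗ[k] X :=
  comp1 k X s ∘ₗ GmapCop k X p ∘ₗ (TensorProduct.comm k X X).toLinearMap

/-- left non-degeneracy of `s` : `G_s` is invertible -/
def LeftNonDeg (s : X ⊗[k] X →ₗ[k] X ⊗[k] X) : Prop :=
  Function.Bijective (Gmap k X (comp2 k X s))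

/-- `p` is the operation `·` associated with a left non-degenerate `s`, i.e.
`(x·y₍₁₎)^(y₍₂₎) = x^(y₍₁₎)·y₍₂₎ = ε(y)x`. -/
def IsDotOf (s : X ⊗[k] X →ₗ[k] X ⊗[k] X) (p : X ⊗[k] X →ₗ[k] X) : Prop :=
  comp2 k X s ∘ₗ Gmap k X p = cE k X ∧ p ∘ₗ Gmap k X (comp2 k X s) = cE k X

def s12m (s : X ⊗[k] X →ₗ[k] X ⊗[k] X) : (X ⊗[k] X) ⊗[k] X →ₗ[k] (X ⊗[k] X) ⊗[k] X :=
  LinearMap.rTensor X s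

def s23m (s : X ⊗[k] X →ₗ[k] X ⊗[k] X) : (X ⊗[k] X) ⊗[k] X →ₗ[k] (X ⊗[k] X) ⊗[k] X :=
  (TensorProduct.assoc k X X X).symm.toLinearMap ∘ₗ LinearMap.lTensor X s ∘ₗ
    (TensorProduct.assoc k X X X).toLinearMap

/-- the braid equation -/
def IsBraidSol (s : X ⊗[k] X →ₗ[k] X ⊗[k] X) : Prop :=
  s12m k X s ∘ₗ s23m k X s ∘ₗ s12m k X s = s23m k X s ∘ₗ s12m k X s ∘ₗ s23m k X s

/-- the exchange identity `y₍₁₎⊥x₍₂₎ ⊗ x₍₁₎·y₍₂₎ = y₍₂₎⊥x₍₁₎ ⊗ x₍₂₎·y₍₁₎` -/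
def ExchangeId (p d : X ⊗[k] X →ₗ[k] X) : Prop :=
  ∀ (x y : X) (n m : ℕ) (x1 x2 : Fin n → X) (y1 y2 : Fin m → X),
    (∑ i, x1 i ⊗ₜ[k] x2 i) = Coalgebra.comul (R := k) x →
    (∑ j, y1 j ⊗ₜ[k] y2 j) = Coalgebra.comul (R := k) y →
    (∑ i, ∑ j, d (y1 j ⊗ₜ[k] x2 i) ⊗ₜ[k] p (x1 i ⊗ₜ[k] y2 j)) =
      ∑ i, ∑ j, d (y2 j ⊗ₜ[k] x1 i) ⊗ₜ[k] p (x2 i ⊗ₜ[k] y1 j)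

/-- the three q-cycle coalgebra conditions -/
def QCycleConds (p d : X ⊗[k] X →ₗ[k] X) : Prop :=
  ∀ (x y z : X) (n m : ℕ) (y1 y2 : Fin n → X) (z1 z2 : Fin m → X),
    (∑ i, y1 i ⊗ₜ[k] y2 i) = Coalgebra.comul (R := k) y →
    (∑ j, z1 j ⊗ₜ[k] z2 j) = Coalgebra.comul (R := k) z →
    ((∑ i, p (p (x ⊗ₜ[k] y1 i) ⊗ₜ[k] d (z ⊗ₜ[k] y2 i))) =
        ∑ j, p (p (x ⊗ₜ[k] z2 j) ⊗ₜ[k] p (y ⊗ₜ[k] z1 j)) ∧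
     (∑ i, d (p (x ⊗ₜ[k] y1 i) ⊗ₜ[k] p (z ⊗ₜ[k] y2 i))) =
        ∑ j, p (d (x ⊗ₜ[k] z2 j) ⊗ₜ[k] d (y ⊗ₜ[k] z1 j)) ∧
     (∑ i, d (d (x ⊗ₜ[k] y1 i) ⊗ₜ[k] d (z ⊗ₜ[k] y2 i))) =
        ∑ j, d (d (x ⊗ₜ[k] z2 j) ⊗ₜ[k] p (y ⊗ₜ[k] z1 j)))


/-- the left action `ˣy := y₍₂₎ ⊥ x^(y₍₁₎)`, where `g` is the operation `x^y` -/
def bOf (g d : X ⊗[k] X →ₗ[k] X) : X ⊗[k] X →ₗ[k] X :=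
  d ∘ₗ (TensorProduct.comm k X X).toLinearMap ∘ₗ Gmap k X g

/-- the left action `_xy := y₍₁₎ · x_(y₍₂₎)`, where `g'` is the operation `x_y` -/
def uOfCop (g' p : X ⊗[k] X →ₗ[k] X) : X ⊗[k] X →ₗ[k] X :=
  p ∘ₗ (TensorProduct.comm k X X).toLinearMap ∘ₗ GmapCop k X g'

/-- `Hmap f (x ⊗ y) = f (y₍₂₎ ⊗ x) ⊗ y₍₁₎` -/
def Hmap (f : X ⊗[k] X →ₗ[k] X) : X ⊗[k] X →ₗ[k] X ⊗[k] X :=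
  TensorProduct.map f LinearMap.id ∘ₗ (TensorProduct.assoc k X X X).symm.toLinearMap ∘ₗ
    LinearMap.lTensor X (TensorProduct.comm k X X).toLinearMap ∘ₗ
    (TensorProduct.assoc k X X X).toLinearMap ∘ₗ
    LinearMap.rTensor X (comulCop k X) ∘ₗ (TensorProduct.comm k X X).toLinearMap

/-- `HmapCop f (x ⊗ y) = f (y₍₁₎ ⊗ x) ⊗ y₍₂₎` -/
def HmapCop (f : X ⊗[k] X →ₗ[k] X) : X ⊗[k] X →ₗ[k] X ⊗[k] X :=
  TensorProduct.map f LinearMap.id ∘ₗ (TensorProduct.assoc k X X X).symm.toLinearMap ∘ₗ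
    LinearMap.lTensor X (TensorProduct.comm k X X).toLinearMap ∘ₗ
    (TensorProduct.assoc k X X X).toLinearMap ∘ₗ
    LinearMap.rTensor X (Coalgebra.comul (R := k)) ∘ₗ (TensorProduct.comm k X X).toLinearMap

lemma cE_tmul (x y : X) : cE k X (x ⊗ₜ[k] y) = counit (R := k) y • x := by
  simp [cE]

lemma comulT_tmul (a b : X) : comulT k X (a ⊗ₜ[k] b) =
    TensorProduct.tensorTensorTensorComm k X X X X
      (Coalgebra.comul (R := k) a ⊗ₜ[k] Coalgebra.comul (R := k) b) := by
  simp [comulT]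

lemma comulTCop_tmul (a b : X) : comulTCop k X (a ⊗ₜ[k] b) =
    TensorProduct.tensorTensorTensorComm k X X X X
      (Coalgebra.comul (R := k) a ⊗ₜ[k]
        TensorProduct.comm k X X (Coalgebra.comul (R := k) b)) := by
  simp [comulTCop, comulCop]

lemma Gmap_tmul (f : X ⊗[k] X →ₗ[k] X) (x y : X) (r : Coalgebra.Repr k y (X × X)) :
    Gmap k X f (x ⊗ₜ[k] y) = ∑ i ∈ r.index, f (x ⊗ₜ[k] r.left i) ⊗ₜ[k] r.right i := by
  simp only [Gmap, LinearMap.comp_apply, LinearEquiv.coe_coe, LinearMap.lTensor_tmul]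
  rw [← r.eq]
  simp [tmul_sum, map_sum]

lemma sum_counit_smul_right (y : X) (r : Coalgebra.Repr k y (X × X)) :
    ∑ i ∈ r.index, counit (R := k) (r.left i) • r.right i = y := by
  calc ∑ i ∈ r.index, counit (R := k) (r.left i) • r.right i
      = TensorProduct.lid k X (∑ i ∈ r.index, counit (R := k) (r.left i) ⊗ₜ[k] r.right i) := by
        simp only [map_sum, lid_tmul]
    _ = y := by rw [sum_counit_tmul_eq (R := k) r]; simp

lemma coassoc_repr (y : X) (r : Coalgebra.Repr k y (X × X)) (q : ∀ i : r.ι, Coalgebra.Repr k (r.right i) (X × X)) :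
    ∑ i ∈ r.index, (Coalgebra.comul (R := k) (r.left i)) ⊗ₜ[k] r.right i
      = ∑ i ∈ r.index, ∑ l ∈ (q i).index,
          (r.left i ⊗ₜ[k] (q i).left l) ⊗ₜ[k] (q i).right l := by
  calc ∑ i ∈ r.index, (Coalgebra.comul (R := k) (r.left i)) ⊗ₜ[k] r.right i
      = (Coalgebra.comul (R := k)).rTensor X (Coalgebra.comul (R := k) y) := by
        rw [← r.eq]; simp [map_sum]
    _ = (TensorProduct.assoc k X X X).symm ((Coalgebra.comul (R := k)).lTensor X
          (Coalgebra.comul (R := k) y)) := (coassoc_symm_apply (R := k) y).symm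
    _ = ∑ i ∈ r.index, ∑ l ∈ (q i).index,
          (r.left i ⊗ₜ[k] (q i).left l) ⊗ₜ[k] (q i).right l := by
        rw [← r.eq]
        simp only [map_sum, LinearMap.lTensor_tmul]
        refine Finset.sum_congr rfl fun i _ => ?_
        rw [← (q i).eq]
        simp [tmul_sum, map_sum]

lemma KEI (y : X) (r : Coalgebra.Repr k y (X × X)) (q : ∀ i : r.ι, Coalgebra.Repr k (r.right i) (X × X))
    (n : ∀ i : r.ι, ∀ l : (q i).ι, Coalgebra.Repr k ((q i).left l) (X × X)) :
    ∑ i ∈ r.index, (Coalgebra.comul (R := k) (r.left i)) ⊗ₜ[k] (Coalgebra.comul (R := k) (r.right i))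
      = ∑ i ∈ r.index, ∑ l ∈ (q i).index, ∑ m ∈ (n i l).index,
          (r.left i ⊗ₜ[k] (n i l).left m) ⊗ₜ[k] ((n i l).right m ⊗ₜ[k] (q i).right l) := by
  have key : ∀ i : r.ι,
      ∑ l ∈ (q i).index, (q i).left l ⊗ₜ[k] (Coalgebra.comul (R := k) ((q i).right l))
        = ∑ l ∈ (q i).index, ∑ m ∈ (n i l).index,
            (n i l).left m ⊗ₜ[k] ((n i l).right m ⊗ₜ[k] (q i).right l) := by
    intro i
    calc ∑ l ∈ (q i).index, (q i).left l ⊗ₜ[k] (Coalgebra.comul (R := k) ((q i).right l))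
        = (Coalgebra.comul (R := k)).lTensor X (Coalgebra.comul (R := k) (r.right i)) := by
          rw [← (q i).eq]; simp [map_sum]
      _ = TensorProduct.assoc k X X X ((Coalgebra.comul (R := k)).rTensor X
            (Coalgebra.comul (R := k) (r.right i))) := (coassoc_apply (R := k) _).symm
      _ = _ := by
          rw [← (q i).eq]
          simp only [map_sum, LinearMap.rTensor_tmul]
          refine Finset.sum_congr rfl fun l _ => ?_
          rw [← (n i l).eq]
          simp [sum_tmul, map_sum]
  calc ∑ i ∈ r.index, (Coalgebra.comul (R := k) (r.left i)) ⊗ₜ[k] (Coalgebra.comul (R := k) (r.right i))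
      = TensorProduct.map LinearMap.id (Coalgebra.comul (R := k))
          (∑ i ∈ r.index, (Coalgebra.comul (R := k) (r.left i)) ⊗ₜ[k] r.right i) := by
        simp [map_sum]
    _ = ∑ i ∈ r.index, ∑ l ∈ (q i).index,
          (r.left i ⊗ₜ[k] (q i).left l) ⊗ₜ[k] (Coalgebra.comul (R := k) ((q i).right l)) := by
        rw [coassoc_repr k X y r q]
        simp [map_sum]
    _ = ∑ i ∈ r.index, (TensorProduct.assoc k X X (X ⊗[k] X)).symm
          (r.left i ⊗ₜ[k] (∑ l ∈ (q i).index, (q i).left l ⊗ₜ[k]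
            (Coalgebra.comul (R := k) ((q i).right l)))) := by
        simp [tmul_sum, map_sum]
    _ = _ := by
        refine Finset.sum_congr rfl fun i _ => ?_
        rw [key i]
        simp [tmul_sum, map_sum]

lemma contraction {f g : X ⊗[k] X →ₗ[k] X} (h : g ∘ₗ Gmap k X f = cE k X)
    (z w : X) (r : Coalgebra.Repr k w (X × X)) :
    ∑ m ∈ r.index, g (f (z ⊗ₜ[k] r.left m) ⊗ₜ[k] r.right m) = counit (R := k) w • z := by
  have := LinearMap.congr_fun h (z ⊗ₜ[k] w)
  rw [LinearMap.comp_apply, Gmap_tmul k X f z w r, cE_tmul] at this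
  simpa [map_sum] using this

lemma D1core {α β : X ⊗[k] X →ₗ[k] X}
    (hα : Coalgebra.comul (R := k) ∘ₗ α = TensorProduct.map α α ∘ₗ comulT k X)
    (h2 : β ∘ₗ Gmap k X α = cE k X) :
    Coalgebra.comul (R := k) ∘ₗ β ∘ₗ Gmap k X α
      = TensorProduct.map β β ∘ₗ comulTCop k X ∘ₗ Gmap k X α := by
  apply TensorProduct.ext'
  intro x y
  set r := ℛ k y with hr
  set q : ∀ i : r.ι, Coalgebra.Repr k (r.right i) (X × X) := fun i => ℛ k (r.right i) with hq
  set n : ∀ i : r.ι, ∀ l : (q i).ι, Coalgebra.Repr k ((q i).left l) (X × X) :=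
    fun i l => ℛ k ((q i).left l) with hn
  set s := ℛ k x with hs
  set Xi : (X ⊗[k] X) ⊗[k] (X ⊗[k] X) →ₗ[k] X ⊗[k] X :=
    TensorProduct.map β β ∘ₗ (TensorProduct.tensorTensorTensorComm k X X X X).toLinearMap ∘ₗ
      TensorProduct.map
        (TensorProduct.map α α ∘ₗ (TensorProduct.tensorTensorTensorComm k X X X X).toLinearMap ∘ₗ
          TensorProduct.mk k (X ⊗[k] X) (X ⊗[k] X) (Coalgebra.comul (R := k) x))
        (TensorProduct.comm k X X).toLinearMap with hXi
  have lhs_eq : (Coalgebra.comul (R := k) ∘ₗ β ∘ₗ Gmap k X α) (x ⊗ₜ[k] y)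
      = counit (R := k) y • Coalgebra.comul (R := k) x := by
    have h := LinearMap.congr_fun h2 (x ⊗ₜ[k] y)
    rw [LinearMap.comp_apply] at h
    rw [LinearMap.comp_apply, LinearMap.comp_apply, h, cE_tmul, map_smul]
  rw [lhs_eq]
  symm
  calc (TensorProduct.map β β ∘ₗ comulTCop k X ∘ₗ Gmap k X α) (x ⊗ₜ[k] y)
      = ∑ i ∈ r.index, Xi (Coalgebra.comul (R := k) (r.left i) ⊗ₜ[k]
          Coalgebra.comul (R := k) (r.right i)) := by
        rw [LinearMap.comp_apply, LinearMap.comp_apply, Gmap_tmul k X α x y r, map_sum, map_sum]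
        refine Finset.sum_congr rfl fun i _ => ?_
        rw [comulTCop_tmul]
        have hcm : Coalgebra.comul (R := k) (α (x ⊗ₜ[k] r.left i))
            = TensorProduct.map α α (comulT k X (x ⊗ₜ[k] r.left i)) :=
          LinearMap.congr_fun hα (x ⊗ₜ[k] r.left i)
        rw [hcm, comulT_tmul]
        simp [hXi]
    _ = Xi (∑ i ∈ r.index, Coalgebra.comul (R := k) (r.left i) ⊗ₜ[k]
          Coalgebra.comul (R := k) (r.right i)) := by rw [map_sum]
    _ = ∑ i ∈ r.index, ∑ l ∈ (q i).index, ∑ m ∈ (n i l).index,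
          Xi ((r.left i ⊗ₜ[k] (n i l).left m) ⊗ₜ[k] ((n i l).right m ⊗ₜ[k] (q i).right l)) := by
        rw [KEI k X y r q n]
        simp [map_sum]
    _ = ∑ i ∈ r.index, ∑ l ∈ (q i).index, ∑ m ∈ (n i l).index, ∑ j ∈ s.index,
          β (α (s.left j ⊗ₜ[k] r.left i) ⊗ₜ[k] (q i).right l) ⊗ₜ[k]
            β (α (s.right j ⊗ₜ[k] (n i l).left m) ⊗ₜ[k] (n i l).right m) := by
        refine Finset.sum_congr rfl fun i _ => Finset.sum_congr rfl fun l _ =>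
          Finset.sum_congr rfl fun m _ => ?_
        rw [hXi]
        simp only [LinearMap.comp_apply, LinearEquiv.coe_coe, TensorProduct.map_tmul,
          TensorProduct.mk_apply, TensorProduct.comm_tmul]
        rw [← s.eq]
        simp [sum_tmul, map_sum, tmul_sum]
    _ = ∑ i ∈ r.index, ∑ l ∈ (q i).index, ∑ j ∈ s.index,
          counit (R := k) ((q i).left l) •
            (β (α (s.left j ⊗ₜ[k] r.left i) ⊗ₜ[k] (q i).right l) ⊗ₜ[k] s.right j) := by
        refine Finset.sum_congr rfl fun i _ => Finset.sum_congr rfl fun l _ => ?_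
        rw [Finset.sum_comm]
        refine Finset.sum_congr rfl fun j _ => ?_
        rw [← tmul_sum, contraction k X h2 (s.right j) ((q i).left l) (n i l),
          tmul_smul]
    _ = ∑ i ∈ r.index, ∑ j ∈ s.index,
          β (α (s.left j ⊗ₜ[k] r.left i) ⊗ₜ[k] r.right i) ⊗ₜ[k] s.right j := by
        refine Finset.sum_congr rfl fun i _ => ?_
        rw [Finset.sum_comm]
        refine Finset.sum_congr rfl fun j _ => ?_
        set L : X →ₗ[k] X ⊗[k] X :=
          ((TensorProduct.mk k X X).flip (s.right j)) ∘ₗ β ∘ₗ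
            TensorProduct.mk k X X (α (s.left j ⊗ₜ[k] r.left i)) with hL
        have : ∀ c : X, β (α (s.left j ⊗ₜ[k] r.left i) ⊗ₜ[k] c) ⊗ₜ[k] s.right j = L c := by
          intro c; simp [hL]
        rw [this]
        calc ∑ l ∈ (q i).index, counit (R := k) ((q i).left l) • L ((q i).right l)
            = L (∑ l ∈ (q i).index, counit (R := k) ((q i).left l) • (q i).right l) := by
              rw [map_sum]; exact Finset.sum_congr rfl fun l _ => (map_smul L _ _).symm
          _ = L (r.right i) := by rw [sum_counit_smul_right k X (r.right i) (q i)]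
          _ = _ := by simp [hL]
    _ = ∑ j ∈ s.index, (counit (R := k) y • s.left j) ⊗ₜ[k] s.right j := by
        rw [Finset.sum_comm]
        refine Finset.sum_congr rfl fun j _ => ?_
        rw [← sum_tmul, contraction k X h2 (s.left j) y r]
    _ = counit (R := k) y • Coalgebra.comul (R := k) x := by
        rw [← s.eq, Finset.smul_sum]
        exact Finset.sum_congr rfl fun j _ => (smul_tmul' _ _ _)
lemma D2core {α β : X ⊗[k] X →ₗ[k] X}
    (hβ : Coalgebra.comul (R := k) ∘ₗ β = TensorProduct.map β β ∘ₗ comulTCop k X)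
    (h1 : α ∘ₗ Gmap k X β = cE k X) :
    Coalgebra.comul (R := k) ∘ₗ α ∘ₗ Gmap k X β
      = TensorProduct.map α α ∘ₗ comulT k X ∘ₗ Gmap k X β := by
  apply TensorProduct.ext'
  intro x y
  set r := ℛ k y with hr
  set q : ∀ i : r.ι, Coalgebra.Repr k (r.right i) (X × X) := fun i => ℛ k (r.right i) with hq
  set n : ∀ i : r.ι, ∀ l : (q i).ι, Coalgebra.Repr k ((q i).left l) (X × X) :=
    fun i l => ℛ k ((q i).left l) with hn
  set s := ℛ k x with hs
  set Xi : (X ⊗[k] X) ⊗[k] (X ⊗[k] X) →ₗ[k] X ⊗[k] X :=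
    TensorProduct.map α α ∘ₗ (TensorProduct.tensorTensorTensorComm k X X X X).toLinearMap ∘ₗ
      TensorProduct.map
        (TensorProduct.map β β ∘ₗ (TensorProduct.tensorTensorTensorComm k X X X X).toLinearMap ∘ₗ
          TensorProduct.mk k (X ⊗[k] X) (X ⊗[k] X) (Coalgebra.comul (R := k) x) ∘ₗ
          (TensorProduct.comm k X X).toLinearMap)
        LinearMap.id with hXi
  have lhs_eq : (Coalgebra.comul (R := k) ∘ₗ α ∘ₗ Gmap k X β) (x ⊗ₜ[k] y)
      = counit (R := k) y • Coalgebra.comul (R := k) x := by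
    have h := LinearMap.congr_fun h1 (x ⊗ₜ[k] y)
    rw [LinearMap.comp_apply] at h
    rw [LinearMap.comp_apply, LinearMap.comp_apply, h, cE_tmul, map_smul]
  rw [lhs_eq]
  symm
  calc (TensorProduct.map α α ∘ₗ comulT k X ∘ₗ Gmap k X β) (x ⊗ₜ[k] y)
      = ∑ i ∈ r.index, Xi (Coalgebra.comul (R := k) (r.left i) ⊗ₜ[k]
          Coalgebra.comul (R := k) (r.right i)) := by
        rw [LinearMap.comp_apply, LinearMap.comp_apply, Gmap_tmul k X β x y r, map_sum, map_sum]
        refine Finset.sum_congr rfl fun i _ => ?_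
        rw [comulT_tmul]
        have hcm : Coalgebra.comul (R := k) (β (x ⊗ₜ[k] r.left i))
            = TensorProduct.map β β (comulTCop k X (x ⊗ₜ[k] r.left i)) :=
          LinearMap.congr_fun hβ (x ⊗ₜ[k] r.left i)
        rw [hcm, comulTCop_tmul]
        simp [hXi]
    _ = Xi (∑ i ∈ r.index, Coalgebra.comul (R := k) (r.left i) ⊗ₜ[k]
          Coalgebra.comul (R := k) (r.right i)) := by rw [map_sum]
    _ = ∑ i ∈ r.index, ∑ l ∈ (q i).index, ∑ m ∈ (n i l).index,
          Xi ((r.left i ⊗ₜ[k] (n i l).left m) ⊗ₜ[k] ((n i l).right m ⊗ₜ[k] (q i).right l)) := by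
        rw [KEI k X y r q n]
        simp [map_sum]
    _ = ∑ i ∈ r.index, ∑ l ∈ (q i).index, ∑ m ∈ (n i l).index, ∑ j ∈ s.index,
          α (β (s.left j ⊗ₜ[k] (n i l).left m) ⊗ₜ[k] (n i l).right m) ⊗ₜ[k]
            α (β (s.right j ⊗ₜ[k] r.left i) ⊗ₜ[k] (q i).right l) := by
        refine Finset.sum_congr rfl fun i _ => Finset.sum_congr rfl fun l _ =>
          Finset.sum_congr rfl fun m _ => ?_
        rw [hXi]
        simp only [LinearMap.comp_apply, LinearEquiv.coe_coe, TensorProduct.map_tmul,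
          TensorProduct.mk_apply, TensorProduct.comm_tmul, LinearMap.id_coe, id_eq]
        rw [← s.eq]
        simp [sum_tmul, map_sum, tmul_sum]
    _ = ∑ i ∈ r.index, ∑ l ∈ (q i).index, ∑ j ∈ s.index,
          counit (R := k) ((q i).left l) •
            (s.left j ⊗ₜ[k] α (β (s.right j ⊗ₜ[k] r.left i) ⊗ₜ[k] (q i).right l)) := by
        refine Finset.sum_congr rfl fun i _ => Finset.sum_congr rfl fun l _ => ?_
        rw [Finset.sum_comm]
        refine Finset.sum_congr rfl fun j _ => ?_
        rw [← sum_tmul, contraction k X h1 (s.left j) ((q i).left l) (n i l), smul_tmul',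
          smul_tmul]
    _ = ∑ i ∈ r.index, ∑ j ∈ s.index,
          s.left j ⊗ₜ[k] α (β (s.right j ⊗ₜ[k] r.left i) ⊗ₜ[k] r.right i) := by
        refine Finset.sum_congr rfl fun i _ => ?_
        rw [Finset.sum_comm]
        refine Finset.sum_congr rfl fun j _ => ?_
        set L : X →ₗ[k] X ⊗[k] X :=
          TensorProduct.mk k X X (s.left j) ∘ₗ α ∘ₗ
            TensorProduct.mk k X X (β (s.right j ⊗ₜ[k] r.left i)) with hL
        have hLc : ∀ c : X, s.left j ⊗ₜ[k] α (β (s.right j ⊗ₜ[k] r.left i) ⊗ₜ[k] c) = L c := by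
          intro c; simp [hL]
        rw [hLc]
        calc ∑ l ∈ (q i).index, counit (R := k) ((q i).left l) • L ((q i).right l)
            = L (∑ l ∈ (q i).index, counit (R := k) ((q i).left l) • (q i).right l) := by
              rw [map_sum]; exact Finset.sum_congr rfl fun l _ => (map_smul L _ _).symm
          _ = L (r.right i) := by rw [sum_counit_smul_right k X (r.right i) (q i)]
          _ = _ := by simp [hL]
    _ = ∑ j ∈ s.index, s.left j ⊗ₜ[k] (counit (R := k) y • s.right j) := by
        rw [Finset.sum_comm]
        refine Finset.sum_congr rfl fun j _ => ?_
        rw [← tmul_sum, contraction k X h1 (s.right j) y r]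
    _ = counit (R := k) y • Coalgebra.comul (R := k) x := by
        rw [← s.eq, Finset.smul_sum]
        exact Finset.sum_congr rfl fun j _ => (tmul_smul _ _ _)
lemma sum_counit_smul_left (y : X) (r : Coalgebra.Repr k y (X × X)) :
    ∑ i ∈ r.index, counit (R := k) (r.right i) • r.left i = y := by
  calc ∑ i ∈ r.index, counit (R := k) (r.right i) • r.left i
      = TensorProduct.rid k X (∑ i ∈ r.index, r.left i ⊗ₜ[k] counit (R := k) (r.right i)) := by
        simp only [map_sum, rid_tmul]
    _ = y := by rw [sum_tmul_counit_eq (R := k) r]; simp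

lemma counit_comp_cE : Coalgebra.counit (R := k) ∘ₗ cE k X = counitT k X := by
  apply TensorProduct.ext'
  intro a b
  simp [cE, counitT, mul_comm]

lemma counitT_Gmap (f : X ⊗[k] X →ₗ[k] X) :
    counitT k X ∘ₗ Gmap k X f = Coalgebra.counit (R := k) ∘ₗ f := by
  apply TensorProduct.ext'
  intro x y
  set r := ℛ k y with hr
  have hxy : x ⊗ₜ[k] y = ∑ i ∈ r.index, counit (R := k) (r.right i) • (x ⊗ₜ[k] r.left i) := by
    calc x ⊗ₜ[k] y = x ⊗ₜ[k] (∑ i ∈ r.index, counit (R := k) (r.right i) • r.left i) := by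
          rw [sum_counit_smul_left]
      _ = _ := by rw [tmul_sum]; exact Finset.sum_congr rfl fun i _ => tmul_smul _ _ _
  rw [LinearMap.comp_apply, LinearMap.comp_apply, Gmap_tmul k X f x y r, map_sum]
  conv_rhs => rw [hxy, map_sum, map_sum]
  simp [counitT, smul_eq_mul, mul_comm]

/-- `Gmap g ∘ Gmap f = id` when `g ∘ Gmap f = cE`. -/
lemma Gmap_Gmap {f g : X ⊗[k] X →ₗ[k] X} (h : g ∘ₗ Gmap k X f = cE k X) :
    Gmap k X g ∘ₗ Gmap k X f = LinearMap.id := by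
  apply TensorProduct.ext'
  intro x y
  set r := ℛ k y with hr
  set q : ∀ i : r.ι, Coalgebra.Repr k (r.right i) (X × X) := fun i => ℛ k (r.right i) with hq
  set Dx : X ⊗[k] X →ₗ[k] X :=
    g ∘ₗ TensorProduct.map f LinearMap.id ∘ₗ (TensorProduct.assoc k X X X).symm.toLinearMap
      ∘ₗ TensorProduct.mk k X (X ⊗[k] X) x with hDx
  have hDxΔ : ∀ w : X, Dx (Coalgebra.comul (R := k) w) = counit (R := k) w • x := by
    intro w
    have : Dx (Coalgebra.comul (R := k) w) = g (Gmap k X f (x ⊗ₜ[k] w)) := by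
      simp [hDx, Gmap]
    rw [this, ← LinearMap.comp_apply, h, cE_tmul]
  calc (Gmap k X g ∘ₗ Gmap k X f) (x ⊗ₜ[k] y)
      = ∑ i ∈ r.index, Gmap k X g (f (x ⊗ₜ[k] r.left i) ⊗ₜ[k] r.right i) := by
        rw [LinearMap.comp_apply, Gmap_tmul k X f x y r, map_sum]
    _ = ∑ i ∈ r.index, ∑ l ∈ (q i).index,
          g (f (x ⊗ₜ[k] r.left i) ⊗ₜ[k] (q i).left l) ⊗ₜ[k] (q i).right l := by
        refine Finset.sum_congr rfl fun i _ => ?_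
        rw [Gmap_tmul k X g _ _ (q i)]
    _ = LinearMap.rTensor X Dx (∑ i ∈ r.index, ∑ l ∈ (q i).index,
          (r.left i ⊗ₜ[k] (q i).left l) ⊗ₜ[k] (q i).right l) := by
        simp [map_sum, hDx]
    _ = LinearMap.rTensor X Dx (∑ i ∈ r.index,
          (Coalgebra.comul (R := k) (r.left i)) ⊗ₜ[k] r.right i) := by
        rw [coassoc_repr k X y r q]
    _ = ∑ i ∈ r.index, (counit (R := k) (r.left i) • x) ⊗ₜ[k] r.right i := by
        simp only [map_sum, LinearMap.rTensor_tmul]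
        exact Finset.sum_congr rfl fun i _ => by rw [hDxΔ]
    _ = x ⊗ₜ[k] (∑ i ∈ r.index, counit (R := k) (r.left i) • r.right i) := by
        rw [tmul_sum]
        exact Finset.sum_congr rfl fun i _ => smul_tmul _ _ _
    _ = x ⊗ₜ[k] y := by rw [sum_counit_smul_right]

/-- under the identities `(x·y₍₁₎)^(y₍₂₎) = x^(y₍₁₎)·y₍₂₎ = ε(y)x`,
`α` is a coalgebra morphism (from `X ⊗ X`) iff `β` is (from `X ⊗ X^cop`). -/
theorem stmt_0 (α β : X ⊗[k] X →ₗ[k] X)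
    (h1 : α ∘ₗ Gmap k X β = cE k X) (h2 : β ∘ₗ Gmap k X α = cE k X) :
    IsCoalgMor k X α ↔ IsCoalgMorCop k X β := by
  constructor
  · rintro ⟨hc, hu⟩
    have GG1 : Gmap k X α ∘ₗ Gmap k X β = LinearMap.id := Gmap_Gmap k X h1
    have core := D1core k X hc h2
    constructor
    · refine LinearMap.ext fun z => ?_
      have hz : Gmap k X α (Gmap k X β z) = z := LinearMap.congr_fun GG1 z
      have hcz := LinearMap.congr_fun core (Gmap k X β z)
      simp only [LinearMap.comp_apply] at hcz ⊢
      rw [← hz]; exact hcz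
    · calc Coalgebra.counit (R := k) ∘ₗ β
          = counitT k X ∘ₗ Gmap k X β := (counitT_Gmap k X β).symm
        _ = (Coalgebra.counit (R := k) ∘ₗ α) ∘ₗ Gmap k X β := by rw [hu]
        _ = Coalgebra.counit (R := k) ∘ₗ (α ∘ₗ Gmap k X β) := by rw [LinearMap.comp_assoc]
        _ = Coalgebra.counit (R := k) ∘ₗ cE k X := by rw [h1]
        _ = counitT k X := counit_comp_cE k X
  · rintro ⟨hc, hu⟩
    have GG2 : Gmap k X β ∘ₗ Gmap k X α = LinearMap.id := Gmap_Gmap k X h2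
    have core := D2core k X hc h1
    constructor
    · refine LinearMap.ext fun z => ?_
      have hz : Gmap k X β (Gmap k X α z) = z := LinearMap.congr_fun GG2 z
      have hcz := LinearMap.congr_fun core (Gmap k X α z)
      simp only [LinearMap.comp_apply] at hcz ⊢
      rw [← hz]; exact hcz
    · calc Coalgebra.counit (R := k) ∘ₗ α
          = counitT k X ∘ₗ Gmap k X α := (counitT_Gmap k X α).symm
        _ = (Coalgebra.counit (R := k) ∘ₗ β) ∘ₗ Gmap k X α := by rw [hu]
        _ = Coalgebra.counit (R := k) ∘ₗ (β ∘ₗ Gmap k X α) := by rw [LinearMap.comp_assoc]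
        _ = Coalgebra.counit (R := k) ∘ₗ cE k X := by rw [h2]
        _ = counitT k X := counit_comp_cE k X

end
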